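/- Let n ≥ 1 be an integer, let A and B be n×n real symmetric positive definite matrices, and let C > 0 and D > 0 be real numbers. If A − (1/C) B is positive semidefinite and det A ≤ D · det B, then D C^{n−1} B − A is positive semidefinite. -/

import Mathlib

open Set
open Matrix


lemma aux_dot_one {n : ℕ} {M : Matrix (Fin n) (Fin n) ℝ} (hM : M.IsHermitian) (i : Fin n) :
    dotProduct (star ⇑(hM.eigenvectorBasis i)) ⇑(hM.eigenvectorBasis i) = 1 := by
  have h1 := hM.eigenvectorBasis.orthonormal.1 i
  have h2 : (inner ℝ (hM.eigenvectorBasis i) (hM.eigenvectorBasis i) : ℝ) = 1 := by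
    rw [real_inner_self_eq_norm_sq, h1]; norm_num
  rw [← h2]; simp only [PiLp.inner_apply, RCLike.inner_apply, dotProduct, Pi.star_apply, star_trivial, conj_trivial, mul_comm]

lemma aux_eig_ge {n : ℕ} {M : Matrix (Fin n) (Fin n) ℝ} (hM : M.IsHermitian) (c : ℝ)
    (h : (M - c • (1 : Matrix (Fin n) (Fin n) ℝ)).PosSemidef) (i : Fin n) :
    c ≤ hM.eigenvalues i := by
  have key := h.dotProduct_mulVec_nonneg ⇑(hM.eigenvectorBasis i)
  rw [sub_mulVec, smul_mulVec, one_mulVec, hM.mulVec_eigenvectorBasis,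
    dotProduct_sub, dotProduct_smul, dotProduct_smul, aux_dot_one hM i] at key
  simp only [smul_eq_mul, mul_one] at key
  linarith

lemma aux_psd_of_eig_le {n : ℕ} {M : Matrix (Fin n) (Fin n) ℝ} (hM : M.IsHermitian) (d : ℝ)
    (h : ∀ i, hM.eigenvalues i ≤ d) :
    (d • (1 : Matrix (Fin n) (Fin n) ℝ) - M).PosSemidef := by
  have hU : (hM.eigenvectorUnitary : Matrix (Fin n) (Fin n) ℝ) *
      star (hM.eigenvectorUnitary : Matrix (Fin n) (Fin n) ℝ) = 1 :=
    (Matrix.mem_unitaryGroup_iff).mp hM.eigenvectorUnitary.2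
  have key : d • (1 : Matrix (Fin n) (Fin n) ℝ) - M =
      (hM.eigenvectorUnitary : Matrix (Fin n) (Fin n) ℝ) *
        (Matrix.diagonal (fun i => d - hM.eigenvalues i)) *
        star (hM.eigenvectorUnitary : Matrix (Fin n) (Fin n) ℝ) := by
    conv_lhs => rw [hM.spectral_theorem]
    have : (Matrix.diagonal (fun i => d - hM.eigenvalues i)) =
        Matrix.diagonal (fun _ => d) - Matrix.diagonal ((RCLike.ofReal ∘ hM.eigenvalues)) := by
      rw [Matrix.diagonal_sub]; rfl
    rw [this, Matrix.mul_sub, Matrix.sub_mul]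
    congr 1
    rw [← Matrix.smul_one_eq_diagonal, Matrix.mul_smul, Matrix.mul_one, Matrix.smul_mul, hU]
  rw [key, Matrix.star_eq_conjTranspose]
  exact (Matrix.PosSemidef.diagonal (fun i => by simpa using h i)).mul_mul_conjTranspose_same _


/-- The linear algebra pinching lemma from step (e3.2.1) in the proof of
Theorem 3.4. -/
theorem stmt_19 (n : ℕ) (hn : 1 ≤ n) (A B : Matrix (Fin n) (Fin n) ℝ)
    (hA : A.PosDef) (hB : B.PosDef) (C D : ℝ) (hC : 0 < C) (hD : 0 < D)
    (h1 : (A - C⁻¹ • B).PosSemidef) (h2 : A.det ≤ D * B.det) :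
    ((D * C^(n-1)) • B - A).PosSemidef := by
  set S : Matrix (Fin n) (Fin n) ℝ := (open scoped MatrixOrder in CFC.sqrt B) with hSdef
  have hSS : S * S = B := by open scoped MatrixOrder in exact CFC.sqrt_mul_sqrt_self B hB.posSemidef.nonneg
  have hSH : Sᴴ = S := by open scoped MatrixOrder in exact (CFC.sqrt_nonneg B).posSemidef.1
  have hBdet : 0 < B.det := hB.det_pos
  have hdS : S.det ≠ 0 := by
    intro h
    have : B.det = 0 := by rw [← hSS, Matrix.det_mul, h, mul_zero]
    exact hBdet.ne' this
  have hST : S * S⁻¹ = 1 := Matrix.mul_nonsing_inv S (isUnit_iff_ne_zero.mpr hdS)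
  have hTS : S⁻¹ * S = 1 := Matrix.nonsing_inv_mul S (isUnit_iff_ne_zero.mpr hdS)
  set T : Matrix (Fin n) (Fin n) ℝ := S⁻¹ with hTdef
  have hTH : Tᴴ = T := by rw [hTdef, Matrix.conjTranspose_nonsing_inv, hSH]
  set M : Matrix (Fin n) (Fin n) ℝ := T * A * T with hMdef
  have hM : M.IsHermitian := by
    have := Matrix.isHermitian_conjTranspose_mul_mul T hA.1
    rwa [hTH] at this
  have hTBT : T * B * T = 1 := by
    rw [← hSS, ← Matrix.mul_assoc, Matrix.mul_assoc (T * S), hTS, Matrix.one_mul, hST]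
  -- step 1: M - C⁻¹ • 1 is PSD
  have step1 : (M - C⁻¹ • (1 : Matrix (Fin n) (Fin n) ℝ)).PosSemidef := by
    have hc := h1.mul_mul_conjTranspose_same T
    rw [hTH] at hc
    have heq : T * (A - C⁻¹ • B) * T = M - C⁻¹ • (1 : Matrix (Fin n) (Fin n) ℝ) := by
      rw [Matrix.mul_sub, Matrix.mul_smul, Matrix.sub_mul, Matrix.smul_mul, hTBT, hMdef]
    rwa [heq] at hc
  have hge : ∀ i, C⁻¹ ≤ hM.eigenvalues i := aux_eig_ge hM _ step1
  have hpos : ∀ i, 0 < hM.eigenvalues i := fun i => lt_of_lt_of_le (inv_pos.mpr hC) (hge i)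
  -- determinant of M
  have hSSdet : S.det * S.det = B.det := by rw [← Matrix.det_mul, hSS]
  have hMdet : M.det * B.det = A.det := by
    rw [hMdef, Matrix.det_mul, Matrix.det_mul, hTdef, Matrix.det_nonsing_inv, ← hSSdet]
    rw [Ring.inverse_eq_inv']
    field_simp
  have hdetM : M.det ≤ D := by
    have h3 : M.det * B.det ≤ D * B.det := by rw [hMdet]; exact h2
    exact le_of_mul_le_mul_right h3 hBdet
  have hprodeq : ∏ i, hM.eigenvalues i = M.det := by
    rw [hM.det_eq_prod_eigenvalues]
    norm_num
  -- eigenvalue upper bound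
  have hle : ∀ j, hM.eigenvalues j ≤ D * C ^ (n - 1) := by
    intro j
    have hcard : (Finset.univ.erase j).card = n - 1 := by
      rw [Finset.card_erase_of_mem (Finset.mem_univ j), Finset.card_univ, Fintype.card_fin]
    have herase : (C⁻¹) ^ (n - 1) ≤ ∏ i ∈ Finset.univ.erase j, hM.eigenvalues i := by
      rw [← hcard, ← Finset.prod_const]
      exact Finset.prod_le_prod (fun i _ => le_of_lt (inv_pos.mpr hC)) (fun i _ => hge i)
    have hsplit : hM.eigenvalues j * ∏ i ∈ Finset.univ.erase j, hM.eigenvalues i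
        = ∏ i, hM.eigenvalues i := Finset.mul_prod_erase _ _ (Finset.mem_univ j)
    have hkey : hM.eigenvalues j * (C⁻¹) ^ (n - 1) ≤ D := by
      calc hM.eigenvalues j * (C⁻¹) ^ (n - 1)
          ≤ hM.eigenvalues j * ∏ i ∈ Finset.univ.erase j, hM.eigenvalues i :=
            mul_le_mul_of_nonneg_left herase (le_of_lt (hpos j))
        _ = ∏ i, hM.eigenvalues i := hsplit
        _ = M.det := hprodeq
        _ ≤ D := hdetM
    have hCpow : 0 < C ^ (n - 1) := pow_pos hC _
    rw [inv_pow] at hkey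
    calc hM.eigenvalues j = hM.eigenvalues j * (C ^ (n-1))⁻¹ * C ^ (n-1) := by
          field_simp
      _ ≤ D * C ^ (n - 1) := mul_le_mul_of_nonneg_right hkey (le_of_lt hCpow)
  -- step 2 and transport back
  have step2 := aux_psd_of_eig_le hM (D * C ^ (n - 1)) hle
  have hc2 := step2.mul_mul_conjTranspose_same S
  rw [hSH] at hc2
  have hfinal : S * ((D * C ^ (n - 1)) • (1 : Matrix (Fin n) (Fin n) ℝ) - M) * S
      = (D * C ^ (n - 1)) • B - A := by
    have hSMS : S * M * S = A := by
      have e1 : S * M * S = (S * T) * A * (T * S) := by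
        rw [hMdef]; simp only [Matrix.mul_assoc]
      rw [e1, hST, hTS, Matrix.one_mul, Matrix.mul_one]
    rw [Matrix.mul_sub, Matrix.sub_mul, Matrix.mul_smul, Matrix.mul_one, Matrix.smul_mul,
      hSS, hSMS]
  rwa [hfinal] at hc2
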